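/- Let p > 1, ε > 0, 0 ≤ a < b < ∞, and let ρ : [a, b] → (0, ∞) be a Borel function with ∫_a^b e^{-εpt/(p-1)} ρ(t)^{-1/(p-1)} dt = ∞. Then there exists a Borel function h : [a, b] → [0, ∞) such that ∫_a^b h(t)^p ρ(t) dt < ∞ and ∫_a^b h(t) e^{-εt} dt = ∞. -/

import Mathlib

open MeasureTheory
open scoped ENNReal

private lemma stmt7_aux (F : ℕ → ℝ≥0∞) (hfin : ∀ n, F n < ⊤)
    (htop : Filter.Tendsto F Filter.atTop (nhds ⊤)) :
    ∃ m : ℕ → ℕ, StrictMono m ∧ ∀ k, F (m k) + 1 ≤ F (m (k + 1)) := by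
  have key : ∀ n : ℕ, ∃ n', n < n' ∧ F n + 1 ≤ F n' := by
    intro n
    have h1 : F n + 1 < ⊤ := ENNReal.add_lt_top.2 ⟨hfin n, ENNReal.one_lt_top⟩
    have h2 : ∀ᶠ x in Filter.atTop, F n + 1 < F x := htop.eventually (Ioi_mem_nhds h1)
    obtain ⟨n', hn1, hn2⟩ := (h2.and (Filter.eventually_gt_atTop n)).exists
    exact ⟨n', hn2, hn1.le⟩
  choose f hf1 hf2 using key
  refine ⟨fun k => f^[k] 0, strictMono_nat_of_lt_succ fun k => ?_, fun k => ?_⟩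
  · show f^[k] 0 < f^[k + 1] 0
    rw [Function.iterate_succ_apply']; exact hf1 _
  · show F (f^[k] 0) + 1 ≤ F (f^[k + 1] 0)
    rw [Function.iterate_succ_apply']; exact hf2 _

private lemma stmt7_harmonic : ∑' k : ℕ, ((k : ℝ≥0∞) + 1)⁻¹ = ⊤ := by
  by_contra hne
  have hs := ENNReal.summable_toReal hne
  have heq : (fun k : ℕ => (((k : ℝ≥0∞) + 1)⁻¹).toReal) = fun k : ℕ => ((k + 1 : ℕ) : ℝ)⁻¹ := by
    funext k
    rw [ENNReal.toReal_inv]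
    congr 1
    rw [ENNReal.toReal_add (by simp) (by simp)]
    simp
  rw [heq] at hs
  exact Real.not_summable_natCast_inv ((summable_nat_add_iff 1).1 hs)

private lemma stmt7_psum {p : ℝ} (hp : 1 < p) :
    ∑' k : ℕ, (((k : ℝ≥0∞) + 1)⁻¹) ^ p < ⊤ := by
  have hppos : (0 : ℝ) < p := by linarith
  have hsummable : Summable fun k : ℕ => (((k : ℝ) + 1))⁻¹ ^ p := by
    have h0 : Summable fun n : ℕ => ((n : ℝ) ^ p)⁻¹ := Real.summable_nat_rpow_inv.2 hp
    have h1 : Summable fun n : ℕ => (((n + 1 : ℕ) : ℝ) ^ p)⁻¹ := (summable_nat_add_iff 1).2 h0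
    have : (fun n : ℕ => (((n + 1 : ℕ) : ℝ) ^ p)⁻¹) = fun n : ℕ => (((n : ℝ) + 1))⁻¹ ^ p := by
      funext n
      rw [Real.inv_rpow (by positivity)]
      push_cast
      ring_nf
    rwa [this] at h1
  have heq : ∀ k : ℕ, (((k : ℝ≥0∞) + 1)⁻¹) ^ p = ENNReal.ofReal ((((k : ℝ) + 1))⁻¹ ^ p) := by
    intro k
    rw [← ENNReal.ofReal_rpow_of_nonneg (by positivity) hppos.le]
    congr 1
    rw [ENNReal.ofReal_inv_of_pos (by positivity)]
    congr 1
    push_cast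
    rw [ENNReal.ofReal_add (by positivity) zero_le_one]
    simp
  calc ∑' k : ℕ, (((k : ℝ≥0∞) + 1)⁻¹) ^ p
      = ∑' k : ℕ, ENNReal.ofReal ((((k : ℝ) + 1))⁻¹ ^ p) := tsum_congr heq
    _ = ENNReal.ofReal (∑' k : ℕ, (((k : ℝ) + 1))⁻¹ ^ p) :=
        (ENNReal.ofReal_tsum_of_nonneg (fun k => by positivity) hsummable).symm
    _ < ⊤ := ENNReal.ofReal_lt_top

/-- (case p > 1) if `∫_a^b e^{-εpt/(p-1)} ρ(t)^{-1/(p-1)} dt = ∞`, there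
is a nonnegative Borel function `h` with `∫_a^b h^p ρ < ∞` and `∫_a^b h e^{-εt} = ∞`. -/
theorem stmt_7 (p ε a b : ℝ) (hp : 1 < p) (hε : 0 < ε) (ha : 0 ≤ a) (hab : a < b)
    (ρ : ℝ → ℝ) (hρmeas : Measurable ρ) (hρpos : ∀ t ∈ Set.Icc a b, 0 < ρ t)
    (hdiv : ∫⁻ t in Set.Icc a b,
        ENNReal.ofReal (Real.exp (-(ε * p * t) / (p - 1)) * ρ t ^ (-(1 / (p - 1)))) = ⊤) :
    ∃ h : ℝ → ℝ, Measurable h ∧ (∀ t, 0 ≤ h t) ∧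
      (∫⁻ t in Set.Icc a b, ENNReal.ofReal (h t ^ p * ρ t) < ⊤) ∧
      ∫⁻ t in Set.Icc a b, ENNReal.ofReal (h t * Real.exp (-(ε * t))) = ⊤ := by
  have hp1 : (0 : ℝ) < p - 1 := by linarith
  have hppos : (0 : ℝ) < p := by linarith
  -- the divergent integrand
  set gr : ℝ → ℝ := fun t => Real.exp (-(ε * p * t) / (p - 1)) * ρ t ^ (-(1 / (p - 1))) with hgr_def
  set g : ℝ → ℝ≥0∞ := fun t => ENNReal.ofReal (gr t) with hg_def
  have hgrmeas : Measurable gr :=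
    ((Real.measurable_exp.comp (by fun_prop))).mul (hρmeas.pow measurable_const)
  have hgmeas : Measurable g := hgrmeas.ennreal_ofReal
  have hgfin : ∀ t, g t ≠ ⊤ := fun t => ENNReal.ofReal_ne_top
  set ν : Measure ℝ := volume.restrict (Set.Icc a b) with hν_def
  set μ : Measure ℝ := ν.withDensity g with hμ_def
  have hνfin : ν Set.univ ≠ ⊤ := by
    rw [hν_def, Measure.restrict_apply_univ, Real.volume_Icc]
    exact ENNReal.ofReal_ne_top
  have hμuniv : μ Set.univ = ⊤ := by
    rw [hμ_def, withDensity_apply _ MeasurableSet.univ, Measure.restrict_univ]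
    exact hdiv
  -- level sets of g
  set S : ℕ → Set ℝ := fun n => {t | g t ≤ (n : ℝ≥0∞)} with hS_def
  have hSmeas : ∀ n, MeasurableSet (S n) := fun n => measurableSet_le hgmeas measurable_const
  have hSmono : Monotone S := by
    intro n m hnm t ht
    exact le_trans ht ((Nat.cast_le (α := ℝ≥0∞)).2 hnm)
  have hSunion : (⋃ n, S n) = Set.univ := by
    apply Set.eq_univ_of_forall
    intro t
    obtain ⟨n, hn⟩ := ENNReal.exists_nat_gt (hgfin t)
    exact Set.mem_iUnion.2 ⟨n, hn.le⟩
  have hμS_fin : ∀ n, μ (S n) < ⊤ := by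
    intro n
    rw [hμ_def, withDensity_apply _ (hSmeas n)]
    calc ∫⁻ t in S n, g t ∂ν ≤ ∫⁻ _ in S n, (n : ℝ≥0∞) ∂ν :=
          setLIntegral_mono measurable_const fun t ht => ht
      _ = (n : ℝ≥0∞) * ν (S n) := setLIntegral_const _ _
      _ ≤ (n : ℝ≥0∞) * ν Set.univ := mul_le_mul_right (measure_mono (Set.subset_univ _)) _
      _ < ⊤ := ENNReal.mul_lt_top (ENNReal.natCast_ne_top n).lt_top hνfin.lt_top
  have htend : Filter.Tendsto (fun n => μ (S n)) Filter.atTop (nhds ⊤) := by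
    have := tendsto_measure_iUnion_atTop (μ := μ) hSmono
    rwa [hSunion, hμuniv] at this
  obtain ⟨m, hmmono, hmkey⟩ := stmt7_aux (fun n => μ (S n)) hμS_fin htend
  -- disjoint annuli
  set D : ℕ → Set ℝ := fun k => S (m (k + 1)) \ S (m k) with hD_def
  have hDmeas : ∀ k, MeasurableSet (D k) := fun k => (hSmeas _).diff (hSmeas _)
  have hμD_eq : ∀ k, μ (D k) = μ (S (m (k + 1))) - μ (S (m k)) := fun k =>
    measure_diff (hSmono (hmmono (lt_add_one k)).le) (hSmeas _).nullMeasurableSet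
      (hμS_fin _).ne
  have hD1 : ∀ k, 1 ≤ μ (D k) := by
    intro k
    rw [hμD_eq k]
    exact ENNReal.le_sub_of_add_le_left (hμS_fin _).ne (hmkey k)
  have hD0 : ∀ k, μ (D k) ≠ 0 := by
    intro k h
    have h1 := hD1 k
    rw [h] at h1
    exact absurd h1 (by simp)
  have hDfin : ∀ k, μ (D k) ≠ ⊤ := fun k =>
    ((measure_mono Set.diff_subset).trans_lt (hμS_fin _)).ne
  have hDdisj : ∀ j k, j ≠ k → ∀ t, t ∈ D j → t ∉ D k := by
    intro j k hjk t htj htk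
    rcases lt_or_gt_of_ne hjk with hlt | hlt
    · exact htk.2 (hSmono (hmmono.monotone hlt) htj.1)
    · exact htj.2 (hSmono (hmmono.monotone hlt) htk.1)
  -- coefficients
  set c : ℕ → ℝ≥0∞ := fun k => (((k : ℝ≥0∞) + 1) * μ (D k))⁻¹ with hc_def
  have hk1_ne0 : ∀ k : ℕ, ((k : ℝ≥0∞) + 1) ≠ 0 := fun k => by simp
  have hk1_netop : ∀ k : ℕ, ((k : ℝ≥0∞) + 1) ≠ ⊤ := fun k => by simp
  have hc_eq : ∀ k, c k = ((k : ℝ≥0∞) + 1)⁻¹ * (μ (D k))⁻¹ := fun k =>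
    ENNReal.mul_inv (Or.inl (hk1_ne0 k)) (Or.inl (hk1_netop k))
  have hc_ne_top : ∀ k, c k ≠ ⊤ :=
    fun k => ENNReal.inv_ne_top.2 (mul_ne_zero (hk1_ne0 k) (hD0 k))
  have hcμ : ∀ k, c k * μ (D k) = ((k : ℝ≥0∞) + 1)⁻¹ := by
    intro k
    rw [hc_eq k, mul_assoc, ENNReal.inv_mul_cancel (hD0 k) (hDfin k), mul_one]
  -- the density φ
  set φ : ℝ → ℝ≥0∞ := fun t => ∑' k, (D k).indicator (fun _ => c k) t with hφ_def
  have hφmeas : Measurable φ :=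
    Measurable.ennreal_tsum fun k => measurable_const.indicator (hDmeas k)
  have hφval : ∀ t k, t ∈ D k → φ t = c k := by
    intro t k htk
    simp only [hφ_def]
    rw [tsum_eq_single k fun j hj => Set.indicator_of_notMem (hDdisj k j (Ne.symm hj) t htk) _]
    exact Set.indicator_of_mem htk _
  have hφ0 : ∀ t, (∀ k, t ∉ D k) → φ t = 0 := by
    intro t h
    simp only [hφ_def]
    rw [tsum_congr fun k => Set.indicator_of_notMem (h k) _]
    exact tsum_zero
  have hφ_ne_top : ∀ t, φ t ≠ ⊤ := by
    intro t
    by_cases hex : ∃ k, t ∈ D k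
    · obtain ⟨k, hk⟩ := hex
      rw [hφval t k hk]; exact hc_ne_top k
    · push_neg at hex
      rw [hφ0 t hex]; exact ENNReal.zero_ne_top
  have hφp : ∀ t, φ t ^ p = ∑' k, (D k).indicator (fun _ => c k ^ p) t := by
    intro t
    by_cases hex : ∃ k, t ∈ D k
    · obtain ⟨k, hk⟩ := hex
      rw [hφval t k hk,
        tsum_eq_single k fun j hj => Set.indicator_of_notMem (hDdisj k j (Ne.symm hj) t hk) _,
        Set.indicator_of_mem hk]
    · push_neg at hex
      rw [hφ0 t hex, ENNReal.zero_rpow_of_pos hppos,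
        tsum_congr fun k => Set.indicator_of_notMem (hex k) _]
      exact tsum_zero.symm
  -- key integral computations
  have key_div : ∫⁻ t, g t * φ t ∂ν = ⊤ := by
    have h1 : ∫⁻ t, φ t ∂μ = ⊤ := by
      simp only [hφ_def]
      rw [lintegral_tsum fun k => (measurable_const.indicator (hDmeas k)).aemeasurable]
      rw [tsum_congr fun k => by
        rw [lintegral_indicator (hDmeas k), setLIntegral_const, hcμ k]]
      exact stmt7_harmonic
    rw [hμ_def, lintegral_withDensity_eq_lintegral_mul ν hgmeas hφmeas] at h1
    exact h1
  have key_fin : ∫⁻ t, g t * φ t ^ p ∂ν < ⊤ := by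
    have hφpmeas : Measurable fun t => φ t ^ p := hφmeas.pow measurable_const
    have h1 : ∫⁻ t, φ t ^ p ∂μ ≤ ∑' k : ℕ, (((k : ℝ≥0∞) + 1)⁻¹) ^ p := by
      rw [lintegral_congr hφp,
        lintegral_tsum fun k => (measurable_const.indicator (hDmeas k)).aemeasurable,
        tsum_congr fun k => by
          rw [lintegral_indicator (hDmeas k), setLIntegral_const]]
      refine ENNReal.tsum_le_tsum fun k => ?_
      have hinv1 : (μ (D k))⁻¹ ≤ 1 := ENNReal.inv_le_one.2 (hD1 k)
      calc c k ^ p * μ (D k)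
          = (((k : ℝ≥0∞) + 1)⁻¹) ^ p * ((μ (D k))⁻¹ ^ p * μ (D k)) := by
            rw [hc_eq k, ENNReal.mul_rpow_of_nonneg _ _ hppos.le, mul_assoc]
        _ ≤ (((k : ℝ≥0∞) + 1)⁻¹) ^ p * ((μ (D k))⁻¹ ^ (1 : ℝ) * μ (D k)) := by
            exact mul_le_mul_right (mul_le_mul_left
              (ENNReal.rpow_le_rpow_of_exponent_ge hinv1 hp.le) _) _
        _ = (((k : ℝ≥0∞) + 1)⁻¹) ^ p * ((μ (D k))⁻¹ * μ (D k)) := by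
            rw [ENNReal.rpow_one]
        _ = (((k : ℝ≥0∞) + 1)⁻¹) ^ p := by
            rw [ENNReal.inv_mul_cancel (hD0 k) (hDfin k), mul_one]
    have h2 : ∫⁻ t, φ t ^ p ∂μ < ⊤ := h1.trans_lt (stmt7_psum hp)
    rwa [hμ_def, lintegral_withDensity_eq_lintegral_mul ν hgmeas hφpmeas] at h2
  -- define h
  refine ⟨fun t => Real.exp (ε * t) * (g t * φ t).toReal, ?_, ?_, ?_, ?_⟩
  · exact (Real.measurable_exp.comp (by fun_prop)).mul ((hgmeas.mul hφmeas).ennreal_toReal)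
  · intro t
    exact mul_nonneg (Real.exp_pos _).le ENNReal.toReal_nonneg
  · -- finite weighted integral
    have heq1 : ∀ t ∈ Set.Icc a b,
        ENNReal.ofReal ((Real.exp (ε * t) * (g t * φ t).toReal) ^ p * ρ t) = g t * φ t ^ p := by
      intro t ht
      have hρt := hρpos t ht
      have hgrpos : 0 < gr t :=
        mul_pos (Real.exp_pos _) (Real.rpow_pos_of_pos hρt _)
      have hgt : (g t).toReal = gr t := ENNReal.toReal_ofReal hgrpos.le
      set ft : ℝ := (φ t).toReal with hft_def
      have hft0 : 0 ≤ ft := ENNReal.toReal_nonneg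
      have h1 : Real.exp (ε * t) * (g t * φ t).toReal = Real.exp (ε * t) * (gr t * ft) := by
        rw [ENNReal.toReal_mul, hgt]
      have hQ : -(1 / (p - 1)) * p + 1 = -(1 / (p - 1)) := by
        field_simp
        ring
      have hE : ε * t * p + -(ε * p * t) / (p - 1) * p = -(ε * p * t) / (p - 1) := by
        field_simp
        ring
      have h2 : (Real.exp (ε * t) * (gr t * ft)) ^ p
          = Real.exp (ε * t) ^ p * (gr t ^ p * ft ^ p) := by
        rw [Real.mul_rpow (Real.exp_pos _).le (mul_nonneg hgrpos.le hft0),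
          Real.mul_rpow hgrpos.le hft0]
      have e1 : Real.exp (ε * t) ^ p = Real.exp (ε * t * p) := (Real.exp_mul _ _).symm
      have e2 : gr t ^ p =
          Real.exp (-(ε * p * t) / (p - 1) * p) * ρ t ^ (-(1 / (p - 1)) * p) := by
        simp only [hgr_def]
        rw [Real.mul_rpow (Real.exp_pos _).le (Real.rpow_pos_of_pos hρt _).le,
          ← Real.exp_mul, ← Real.rpow_mul hρt.le]
      have hexp : Real.exp (ε * t * p) * Real.exp (-(ε * p * t) / (p - 1) * p)
          = Real.exp (-(ε * p * t) / (p - 1)) := by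
        rw [← Real.exp_add, hE]
      have hrpow : ρ t ^ (-(1 / (p - 1)) * p) * ρ t = ρ t ^ (-(1 / (p - 1))) := by
        nth_rewrite 2 [← Real.rpow_one (ρ t)]
        rw [← Real.rpow_add hρt, hQ]
      have hreal : (Real.exp (ε * t) * (g t * φ t).toReal) ^ p * ρ t = gr t * ft ^ p := by
        rw [h1, h2, e1, e2]
        calc Real.exp (ε * t * p)
              * (Real.exp (-(ε * p * t) / (p - 1) * p) * ρ t ^ (-(1 / (p - 1)) * p) * ft ^ p)
              * ρ t
            = (Real.exp (ε * t * p) * Real.exp (-(ε * p * t) / (p - 1) * p))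
              * (ρ t ^ (-(1 / (p - 1)) * p) * ρ t) * ft ^ p := by ring
          _ = Real.exp (-(ε * p * t) / (p - 1)) * ρ t ^ (-(1 / (p - 1))) * ft ^ p := by
              rw [hexp, hrpow]
          _ = gr t * ft ^ p := by simp only [hgr_def]
      rw [hreal, ENNReal.ofReal_mul hgrpos.le,
        ← ENNReal.ofReal_rpow_of_nonneg hft0 hppos.le, hft_def,
        ENNReal.ofReal_toReal (hφ_ne_top t)]
    calc ∫⁻ t in Set.Icc a b,
          ENNReal.ofReal ((Real.exp (ε * t) * (g t * φ t).toReal) ^ p * ρ t)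
        = ∫⁻ t in Set.Icc a b, g t * φ t ^ p := by
          exact setLIntegral_congr_fun measurableSet_Icc heq1
      _ < ⊤ := key_fin
  · -- divergent integral
    have heq2 : ∀ t, ENNReal.ofReal
        ((Real.exp (ε * t) * (g t * φ t).toReal) * Real.exp (-(ε * t))) = g t * φ t := by
      intro t
      have hprod : g t * φ t ≠ ⊤ := ENNReal.mul_ne_top (hgfin t) (hφ_ne_top t)
      have : (Real.exp (ε * t) * (g t * φ t).toReal) * Real.exp (-(ε * t))
          = (g t * φ t).toReal := by
        rw [show (Real.exp (ε * t) * (g t * φ t).toReal) * Real.exp (-(ε * t))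
          = (Real.exp (ε * t) * Real.exp (-(ε * t))) * (g t * φ t).toReal from by ring,
          ← Real.exp_add]
        simp
      rw [this, ENNReal.ofReal_toReal hprod]
    calc ∫⁻ t in Set.Icc a b,
          ENNReal.ofReal ((Real.exp (ε * t) * (g t * φ t).toReal) * Real.exp (-(ε * t)))
        = ∫⁻ t in Set.Icc a b, g t * φ t := lintegral_congr heq2
      _ = ⊤ := key_div
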